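/- Let 𝓛₀₁ be the set of all Borel probability measures on ℝ with mean 0 and variance 1, and let α∈(0,1). Then inf_{μ∈𝓛₀₁} q_α(μ) = -√((1-α)/α) and sup_{μ∈𝓛₀₁} q_α(μ) = √(α/(1-α)). -/

import Mathlib

open MeasureTheory Set

/-- The set of all Borel probability measures on ℝ with mean 0 and variance 1. -/
def stdMeasures : Set (Measure ℝ) :=
  {μ | IsProbabilityMeasure μ ∧ (∫ x, x ∂μ) = 0 ∧ (∫ x, x ^ 2 ∂μ) = 1}

/-- The distribution function of a measure: `F_μ(x) = μ((-∞, x])`. -/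
noncomputable def distFun (μ : Measure ℝ) (x : ℝ) : ℝ := (μ (Iic x)).toReal

/-- The lower quantile of order `α`: `q_α(μ) = inf {x : F_μ(x) ≥ α}`. -/
noncomputable def lowerQuantile (μ : Measure ℝ) (α : ℝ) : ℝ :=
  sInf {x : ℝ | α ≤ distFun μ x}

/-! ### Auxiliary lemmas -/

section Aux

lemma integrable_sq_of_std (μ : Measure ℝ) (h2 : (∫ x, x ^ 2 ∂μ) = 1) :
    Integrable (fun x : ℝ => x ^ 2) μ := by
  by_contra h
  rw [integral_undef h] at h2
  exact one_ne_zero h2.symm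

lemma integrable_id_of_std (μ : Measure ℝ) [IsProbabilityMeasure μ]
    (h2 : (∫ x, x ^ 2 ∂μ) = 1) : Integrable (fun x : ℝ => x) μ := by
  have hsq := integrable_sq_of_std μ h2
  refine ((integrable_const (1:ℝ)).add hsq).mono' measurable_id.aestronglyMeasurable ?_
  filter_upwards with x
  have : |x| ≤ 1 + x ^ 2 := by nlinarith [abs_nonneg x, sq_abs x, sq_nonneg (|x| - 1)]
  simpa [Real.norm_eq_abs] using this

lemma integrable_lin_quad (μ : Measure ℝ) [IsProbabilityMeasure μ]
    (h2 : (∫ x, x ^ 2 ∂μ) = 1) (c : ℝ) :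
    Integrable (fun x : ℝ => (c + x) ^ 2) μ := by
  have hsq := integrable_sq_of_std μ h2
  have hid := integrable_id_of_std μ h2
  have : Integrable (fun x : ℝ => c ^ 2 + (2 * c) * x + x ^ 2) μ :=
    ((integrable_const _).add (hid.const_mul _)).add hsq
  refine this.congr ?_
  filter_upwards with x
  ring

lemma integral_lin_quad (μ : Measure ℝ) [IsProbabilityMeasure μ]
    (h1 : (∫ x, x ∂μ) = 0) (h2 : (∫ x, x ^ 2 ∂μ) = 1) (c : ℝ) :
    (∫ x, (c + x) ^ 2 ∂μ) = c ^ 2 + 1 := by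
  have hsq := integrable_sq_of_std μ h2
  have hid := integrable_id_of_std μ h2
  have he : (fun x : ℝ => (c + x) ^ 2) = fun x : ℝ => (c ^ 2 + (2 * c) * x) + x ^ 2 := by
    funext x; ring
  have hI0 : Integrable (fun x : ℝ => (2 * c) * x) μ := by simpa using hid.const_mul (2 * c)
  have hI1 : Integrable (fun x : ℝ => c ^ 2 + (2 * c) * x) μ := by
    simpa using (integrable_const (c ^ 2)).add hI0
  rw [he, integral_add hI1 hsq, integral_add (integrable_const _) hI0, integral_const_mul,
    h1, h2, integral_const]
  simp

/-- One-sided Chebyshev (Cantelli) for the lower tail. -/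
lemma cantelli_Iic (μ : Measure ℝ) [IsProbabilityMeasure μ]
    (h1 : (∫ x, x ∂μ) = 0) (h2 : (∫ x, x ^ 2 ∂μ) = 1) (t : ℝ) (ht : 0 < t) :
    (μ (Iic (-t))).toReal ≤ 1 / (1 + t ^ 2) := by
  set c := 1 / t with hc
  have hc0 : 0 < c := by positivity
  have hintf := integrable_lin_quad μ h2 (-c)
  have hintval := integral_lin_quad μ h1 h2 (-c)
  have key : (c + t) ^ 2 * (μ (Iic (-t))).toReal ≤ (-c) ^ 2 + 1 := by
    calc (c + t) ^ 2 * (μ (Iic (-t))).toReal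
        = ∫ _ in Iic (-t), (c + t) ^ 2 ∂μ := by
          rw [setIntegral_const, smul_eq_mul, mul_comm]; rfl
      _ ≤ ∫ x in Iic (-t), (-c + x) ^ 2 ∂μ := by
          refine setIntegral_mono_on (integrable_const _).integrableOn
            hintf.integrableOn measurableSet_Iic ?_
          intro x hx
          simp only [mem_Iic] at hx
          nlinarith
      _ ≤ ∫ x, (-c + x) ^ 2 ∂μ := by
          refine setIntegral_le_integral hintf ?_
          filter_upwards with x using sq_nonneg _
      _ = (-c) ^ 2 + 1 := hintval
  have hm : 0 ≤ (μ (Iic (-t))).toReal := ENNReal.toReal_nonneg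
  rw [hc] at key
  rw [le_div_iff₀ (by positivity)]
  have ht' := ht.ne'
  have hexp : (1 / t + t) ^ 2 = (1 + t ^ 2) ^ 2 / t ^ 2 := by field_simp
  have hexp2 : (-(1 / t)) ^ 2 + 1 = (1 + t ^ 2) / t ^ 2 := by field_simp
  rw [hexp, hexp2] at key
  have ht2 : (0:ℝ) < t ^ 2 := by positivity
  have h1t : (0:ℝ) < 1 + t ^ 2 := by positivity
  rw [div_mul_eq_mul_div, div_le_div_iff₀ ht2 ht2] at key
  nlinarith [mul_pos h1t ht2]

/-- One-sided Chebyshev (Cantelli) for the upper tail. -/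
lemma cantelli_Ioi (μ : Measure ℝ) [IsProbabilityMeasure μ]
    (h1 : (∫ x, x ∂μ) = 0) (h2 : (∫ x, x ^ 2 ∂μ) = 1) (t : ℝ) (ht : 0 < t) :
    (μ (Ioi t)).toReal ≤ 1 / (1 + t ^ 2) := by
  set c := 1 / t with hc
  have hc0 : 0 < c := by positivity
  have hintf := integrable_lin_quad μ h2 c
  have hintval := integral_lin_quad μ h1 h2 c
  have key : (c + t) ^ 2 * (μ (Ioi t)).toReal ≤ c ^ 2 + 1 := by
    calc (c + t) ^ 2 * (μ (Ioi t)).toReal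
        = ∫ _ in Ioi t, (c + t) ^ 2 ∂μ := by
          rw [setIntegral_const, smul_eq_mul, mul_comm]; rfl
      _ ≤ ∫ x in Ioi t, (c + x) ^ 2 ∂μ := by
          refine setIntegral_mono_on (integrable_const _).integrableOn
            hintf.integrableOn measurableSet_Ioi ?_
          intro x hx
          simp only [mem_Ioi] at hx
          nlinarith
      _ ≤ ∫ x, (c + x) ^ 2 ∂μ := by
          refine setIntegral_le_integral hintf ?_
          filter_upwards with x using sq_nonneg _
      _ = c ^ 2 + 1 := hintval
  have hm : 0 ≤ (μ (Ioi t)).toReal := ENNReal.toReal_nonneg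
  rw [hc] at key
  rw [le_div_iff₀ (by positivity)]
  have ht' := ht.ne'
  have hexp : (1 / t + t) ^ 2 = (1 + t ^ 2) ^ 2 / t ^ 2 := by field_simp
  have hexp2 : (1 / t) ^ 2 + 1 = (1 + t ^ 2) / t ^ 2 := by field_simp
  rw [hexp, hexp2] at key
  have ht2 : (0:ℝ) < t ^ 2 := by positivity
  have h1t : (0:ℝ) < 1 + t ^ 2 := by positivity
  rw [div_mul_eq_mul_div, div_le_div_iff₀ ht2 ht2] at key
  nlinarith [mul_pos h1t ht2]

/-! ### Two-point measures -/

/-- The two-point measure with mass `b²/(1+b²)` at `-1/b` and `1/(1+b²)` at `b`. -/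
noncomputable def twoPt (b : ℝ) : Measure ℝ :=
  (ENNReal.ofReal (b ^ 2 / (1 + b ^ 2))) • Measure.dirac (-1 / b) +
    (ENNReal.ofReal (1 / (1 + b ^ 2))) • Measure.dirac b

lemma twoPt_prob (b : ℝ) : IsProbabilityMeasure (twoPt b) := by
  constructor
  have h1b : (0:ℝ) < 1 + b ^ 2 := by positivity
  rw [twoPt, Measure.add_apply, Measure.smul_apply, Measure.smul_apply,
    Measure.dirac_apply_of_mem (mem_univ _), Measure.dirac_apply_of_mem (mem_univ _)]
  simp only [smul_eq_mul, mul_one]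
  rw [← ENNReal.ofReal_add (by positivity) (by positivity), ← ENNReal.ofReal_one]
  congr 1
  field_simp
  ring

lemma twoPt_integral (b : ℝ) (f : ℝ → ℝ) (hf : Measurable f) :
    (∫ x, f x ∂(twoPt b)) =
      (b ^ 2 / (1 + b ^ 2)) * f (-1 / b) + (1 / (1 + b ^ 2)) * f b := by
  have h1b : (0:ℝ) < 1 + b ^ 2 := by positivity
  have hd1 : Integrable f (Measure.dirac (-1 / b)) := by
    refine (integrable_const (f (-1 / b))).congr ?_
    rw [Filter.eventuallyEq_iff_exists_mem]
    exact ⟨{-1 / b}, by simp [MeasureTheory.ae_dirac_eq], fun x hx => by simp at hx; simp [hx]⟩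
  have hd2 : Integrable f (Measure.dirac b) := by
    refine (integrable_const (f b)).congr ?_
    rw [Filter.eventuallyEq_iff_exists_mem]
    exact ⟨{b}, by simp [MeasureTheory.ae_dirac_eq], fun x hx => by simp at hx; simp [hx]⟩
  rw [twoPt, integral_add_measure (hd1.smul_measure ENNReal.ofReal_ne_top)
    (hd2.smul_measure ENNReal.ofReal_ne_top), integral_smul_measure, integral_smul_measure,
    integral_dirac, integral_dirac, ENNReal.toReal_ofReal (by positivity),
    ENNReal.toReal_ofReal (by positivity)]
  simp [smul_eq_mul]

lemma twoPt_mem_std (b : ℝ) (hb : 0 < b) : twoPt b ∈ stdMeasures := by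
  have h1b : (0:ℝ) < 1 + b ^ 2 := by positivity
  refine ⟨twoPt_prob b, ?_, ?_⟩
  · have h := twoPt_integral b (fun x => x) (by fun_prop)
    rw [h]
    field_simp
    ring
  · have h := twoPt_integral b (fun x => x ^ 2) (by fun_prop)
    rw [h]
    have hb' : b ≠ 0 := hb.ne'
    have : (-1 / b) ^ 2 = 1 / b ^ 2 := by field_simp
    rw [this]
    field_simp

lemma distFun_twoPt (b : ℝ) (hb : 0 < b) (x : ℝ) :
    distFun (twoPt b) x =
      (if -1 / b ≤ x then b ^ 2 / (1 + b ^ 2) else 0) +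
        (if b ≤ x then 1 / (1 + b ^ 2) else 0) := by
  have h1b : (0:ℝ) < 1 + b ^ 2 := by positivity
  rw [distFun, twoPt, Measure.add_apply, Measure.smul_apply, Measure.smul_apply,
    Measure.dirac_apply' _ measurableSet_Iic, Measure.dirac_apply' _ measurableSet_Iic]
  simp only [Set.indicator_apply, mem_Iic, smul_eq_mul, mul_ite, mul_one, mul_zero]
  have hp : (0:ℝ) ≤ b ^ 2 / (1 + b ^ 2) := by positivity
  have hq : (0:ℝ) ≤ 1 / (1 + b ^ 2) := by positivity
  split_ifs <;>
    simp [Pi.one_apply, ENNReal.toReal_add ENNReal.ofReal_ne_top ENNReal.ofReal_ne_top,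
      ENNReal.toReal_ofReal, hp, hq] <;>
    positivity

lemma neg_one_div_lt (b : ℝ) (hb : 0 < b) : -1 / b < b :=
  lt_trans (div_neg_of_neg_of_pos (by norm_num) hb) hb

lemma lowerQuantile_twoPt_of_le (α b : ℝ) (hb : 0 < b) (hα0 : 0 < α)
    (hle : α ≤ b ^ 2 / (1 + b ^ 2)) :
    lowerQuantile (twoPt b) α = -1 / b := by
  have hab := neg_one_div_lt b hb
  have hq : (0:ℝ) ≤ 1 / (1 + b ^ 2) := by positivity
  have hset : {x : ℝ | α ≤ distFun (twoPt b) x} = Ici (-1 / b) := by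
    ext x
    simp only [mem_setOf_eq, mem_Ici, distFun_twoPt b hb]
    constructor
    · intro h
      by_contra hx
      push_neg at hx
      rw [if_neg (not_le.2 hx), if_neg (not_le.2 (hx.trans hab))] at h
      linarith
    · intro h
      rw [if_pos h]
      have h0 : (0:ℝ) ≤ if b ≤ x then 1 / (1 + b ^ 2) else 0 := by
        split_ifs
        · exact hq
        · exact le_refl 0
      linarith
  rw [lowerQuantile, hset, csInf_Ici]

lemma lowerQuantile_twoPt_of_gt (α b : ℝ) (hb : 0 < b) (hα1 : α ≤ 1)
    (hlt : b ^ 2 / (1 + b ^ 2) < α) :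
    lowerQuantile (twoPt b) α = b := by
  have hab := neg_one_div_lt b hb
  have h1b : (0:ℝ) < 1 + b ^ 2 := by positivity
  have hsum : b ^ 2 / (1 + b ^ 2) + 1 / (1 + b ^ 2) = 1 := by field_simp; ring
  have hset : {x : ℝ | α ≤ distFun (twoPt b) x} = Ici b := by
    ext x
    simp only [mem_setOf_eq, mem_Ici, distFun_twoPt b hb]
    constructor
    · intro h
      by_contra hx
      push_neg at hx
      rw [if_neg (not_le.2 hx)] at h
      split_ifs at h with h1
      · linarith
      · have : (0:ℝ) ≤ b ^ 2 / (1 + b ^ 2) := by positivity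
        linarith
    · intro h
      rw [if_pos (le_of_lt (lt_of_lt_of_le hab h)), if_pos h, hsum]
      exact hα1
  rw [lowerQuantile, hset, csInf_Ici]

end Aux

/-- The extremal quantiles over the class of standard probability measures:
`inf_μ q_α(μ) = -√((1-α)/α)` and `sup_μ q_α(μ) = √(α/(1-α))`. -/
theorem extremal_quantiles_std (α : ℝ) (hα : α ∈ Ioo (0 : ℝ) 1) :
    sInf ((fun μ : Measure ℝ => lowerQuantile μ α) '' stdMeasures) =
      -Real.sqrt ((1 - α) / α) ∧
    sSup ((fun μ : Measure ℝ => lowerQuantile μ α) '' stdMeasures) =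
      Real.sqrt (α / (1 - α)) := by
  obtain ⟨hα0, hα1⟩ := hα
  have h1α : (0:ℝ) < 1 - α := by linarith
  set a : ℝ := -Real.sqrt ((1 - α) / α) with ha_def
  set bb : ℝ := Real.sqrt (α / (1 - α)) with hbb_def
  have hbb : 0 < bb := Real.sqrt_pos.2 (by positivity)
  have hbbsq : bb ^ 2 = α / (1 - α) := Real.sq_sqrt (by positivity)
  have hasq : a ^ 2 = (1 - α) / α := by
    rw [ha_def, neg_sq]
    exact Real.sq_sqrt (by positivity)
  have ha0 : a < 0 := by
    rw [ha_def, neg_lt, neg_zero]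
    exact Real.sqrt_pos.2 (by positivity)
  have ha_eq : -1 / bb = a := by
    rw [ha_def, hbb_def, neg_div, neg_inj, one_div, ← Real.sqrt_inv, inv_div]
  have hp_bb : bb ^ 2 / (1 + bb ^ 2) = α := by
    rw [hbbsq]; field_simp; ring
  -- lower bound for every quantile-set element
  have lb : ∀ μ ∈ stdMeasures, ∀ x : ℝ, α ≤ distFun μ x → a ≤ x := by
    rintro μ ⟨hP, h1, h2⟩ x hx
    by_contra hax
    push_neg at hax
    have hx0 : x < 0 := hax.trans ha0
    have hcant := cantelli_Iic μ h1 h2 (-x) (by linarith)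
    simp only [neg_neg, neg_sq] at hcant
    have hxa2 : (1 - α) / α < x ^ 2 := by
      rw [← hasq]
      nlinarith [mul_pos (sub_pos.2 hax) (show (0:ℝ) < -(a + x) by linarith)]
    have hxα : 1 - α < x ^ 2 * α := (div_lt_iff₀ hα0).1 hxa2
    have hcontr : 1 / (1 + x ^ 2) < α := by
      rw [div_lt_iff₀ (by positivity)]
      nlinarith
    have := hx.trans hcant
    linarith
  -- every measure in the class has `α ≤ F(bb)`
  have ubmem : ∀ μ ∈ stdMeasures, α ≤ distFun μ bb := by
    rintro μ ⟨hP, h1, h2⟩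
    have hcant := cantelli_Ioi μ h1 h2 bb hbb
    have hcompl : (μ (Iic bb)).toReal = 1 - (μ (Ioi bb)).toReal := by
      have h := prob_compl_eq_one_sub (μ := μ) (measurableSet_Ioi (a := bb))
      rw [compl_Ioi] at h
      rw [h, ENNReal.toReal_sub_of_le prob_le_one ENNReal.one_ne_top, ENNReal.toReal_one]
    have htail : 1 / (1 + bb ^ 2) = 1 - α := by
      rw [hbbsq]; field_simp; ring
    rw [distFun, hcompl]
    linarith [htail ▸ hcant]
  have q_ge : ∀ μ ∈ stdMeasures, a ≤ lowerQuantile μ α := fun μ hμ =>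
    le_csInf ⟨bb, ubmem μ hμ⟩ (fun x hx => lb μ hμ x hx)
  have q_le : ∀ μ ∈ stdMeasures, lowerQuantile μ α ≤ bb := fun μ hμ =>
    csInf_le ⟨a, fun x hx => lb μ hμ x hx⟩ (ubmem μ hμ)
  have hmem0 : twoPt bb ∈ stdMeasures := twoPt_mem_std bb hbb
  have hquant0 : lowerQuantile (twoPt bb) α = a := by
    rw [lowerQuantile_twoPt_of_le α bb hbb hα0 hp_bb.ge, ha_eq]
  have hne : ((fun μ : Measure ℝ => lowerQuantile μ α) '' stdMeasures).Nonempty :=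
    ⟨lowerQuantile (twoPt bb) α, ⟨twoPt bb, hmem0, rfl⟩⟩
  have hbdd_below : BddBelow ((fun μ : Measure ℝ => lowerQuantile μ α) '' stdMeasures) := by
    refine ⟨a, ?_⟩
    rintro y ⟨μ, hμ, rfl⟩
    exact q_ge μ hμ
  have hbdd_above : BddAbove ((fun μ : Measure ℝ => lowerQuantile μ α) '' stdMeasures) := by
    refine ⟨bb, ?_⟩
    rintro y ⟨μ, hμ, rfl⟩
    exact q_le μ hμ
  constructor
  · refine le_antisymm ?_ ?_
    · have := csInf_le hbdd_below (⟨twoPt bb, hmem0, rfl⟩ :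
        lowerQuantile (twoPt bb) α ∈ (fun μ : Measure ℝ => lowerQuantile μ α) '' stdMeasures)
      rwa [hquant0] at this
    · refine le_csInf hne ?_
      rintro y ⟨μ, hμ, rfl⟩
      exact q_ge μ hμ
  · refine le_antisymm ?_ ?_
    · refine csSup_le hne ?_
      rintro y ⟨μ, hμ, rfl⟩
      exact q_le μ hμ
    · refine le_of_forall_lt ?_
      intro c hc
      have ht0 : 0 < (max c 0 + bb) / 2 := by
        have : (0:ℝ) ≤ max c 0 := le_max_right _ _
        positivity
      set t : ℝ := (max c 0 + bb) / 2 with ht_def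
      have htbb : t < bb := by
        have h1 : max c 0 < bb := max_lt hc hbb
        rw [ht_def]; linarith
      have hct : c < t := by
        have h1 : c ≤ max c 0 := le_max_left _ _
        have h2 : max c 0 < bb := max_lt hc hbb
        rw [ht_def]; linarith
      have htsq : t ^ 2 < bb ^ 2 := by nlinarith
      have hpt : t ^ 2 / (1 + t ^ 2) < α := by
        rw [hbbsq] at htsq
        have h' : t ^ 2 * (1 - α) < α := (lt_div_iff₀ h1α).1 htsq
        rw [div_lt_iff₀ (by positivity)]
        nlinarith
      have hmemt : twoPt t ∈ stdMeasures := twoPt_mem_std t ht0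
      have hquantt : lowerQuantile (twoPt t) α = t :=
        lowerQuantile_twoPt_of_gt α t ht0 hα1.le hpt
      have : t ≤ sSup ((fun μ : Measure ℝ => lowerQuantile μ α) '' stdMeasures) := by
        refine le_csSup hbdd_above ?_
        exact hquantt ▸ ⟨twoPt t, hmemt, rfl⟩
      exact lt_of_lt_of_le hct this
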